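/- arXiv:2412.20596 — 2 statements merged into one kernel-verified Lean document; each statement's English description precedes it below -/
import Mathlib

section
/- Let η ∈ [0,1], ξ ∈ {-1,1}, and τ_{n-1}, τ_n > 0. Suppose that conditioned on x_0, the random vector x_{τ_n} is distributed as N(x_0, τ_n² I), and that conditioned on (x_{τ_n}, x_0), the vector x_{τ_{n-1}} is distributed as N(x_0 + ξ√(1-η²) τ_{n-1} (x_0 - x_{τ_n})/τ_n, η² τ_{n-1}² I). Then the marginal distribution of x_{τ_{n-1}} conditioned on x_0 is N(x_0, τ_{n-1}² I), independent of η and ξ. -/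
open MeasureTheory ProbabilityTheory Matrix Filter

noncomputable def stdGaussian (d : ℕ) : Measure (EuclideanSpace ℝ (Fin d)) :=
  (Measure.pi fun _ : Fin d => gaussianReal 0 1).map (MeasurableEquiv.toLp 2 (Fin d → ℝ))

noncomputable def gaussianVec {d : ℕ} (μ : EuclideanSpace ℝ (Fin d)) (τ : ℝ) :
    Measure (EuclideanSpace ℝ (Fin d)) :=
  (stdGaussian d).map (fun v => μ + τ • v)

open Real
open scoped ENNReal NNReal

lemma pdf_symm (a b : ℝ) (hab : a^2 + b^2 = 1) (hb : b ≠ 0) (x u : ℝ) :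
    gaussianPDF 0 1 x * gaussianPDF (a*x) (NNReal.mk (b^2) (sq_nonneg b)) u
      = gaussianPDF 0 1 u * gaussianPDF (a*u) (NNReal.mk (b^2) (sq_nonneg b)) x := by
  unfold gaussianPDF
  rw [← ENNReal.ofReal_mul (gaussianPDFReal_nonneg _ _ _),
    ← ENNReal.ofReal_mul (gaussianPDFReal_nonneg _ _ _)]
  congr 1
  unfold gaussianPDFReal
  have hb2 : (0:ℝ) < b^2 := by positivity
  have hc : (((NNReal.mk (b^2) (sq_nonneg b)) : ℝ≥0) : ℝ) = b^2 := rfl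
  simp only [NNReal.coe_mk, NNReal.coe_one]
  have hexp : -(x-0)^2/(2*(1:ℝ)) + -(u-a*x)^2/(2*b^2)
      = -(u-0)^2/(2*(1:ℝ)) + -(x-a*u)^2/(2*b^2) := by
    field_simp
    ring_nf
    nlinarith [hab, sq_nonneg x, sq_nonneg u]
  rw [mul_mul_mul_comm, mul_mul_mul_comm ((√(2 * π * 1))⁻¹) (rexp (-(u - 0) ^ 2 / (2 * 1))),
    ← Real.exp_add, ← Real.exp_add, hexp]

lemma oneD (a b : ℝ) (hab : a^2 + b^2 = 1) :
    ((gaussianReal 0 1).prod (gaussianReal 0 1)).map (fun p => a * p.1 + b * p.2)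
      = gaussianReal 0 1 := by
  by_cases hb : b = 0
  · have ha2 : a^2 = 1 := by simpa [hb] using hab
    have hco : (fun p : ℝ × ℝ => a * p.1 + b * p.2) = (fun y : ℝ => a * y) ∘ Prod.fst := by
      funext p; simp [hb]
    rw [hco, ← Measure.map_map (by fun_prop : Measurable fun y : ℝ => a * y) measurable_fst,
      show ((gaussianReal 0 1).prod (gaussianReal 0 1)).map Prod.fst = _ from Measure.fst_prod,
      gaussianReal_map_const_mul a]
    have h1 : ((NNReal.mk (a^2) (sq_nonneg a)) : ℝ≥0) * 1 = 1 := by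
      rw [mul_one, ← NNReal.coe_inj, NNReal.coe_mk, NNReal.coe_one, ha2]
    rw [mul_zero, h1]
  · set vb : ℝ≥0 := (NNReal.mk (b^2) (sq_nonneg b)) with hvb
    have hvb0 : vb ≠ 0 := by
      simp only [hvb, ne_eq, ← NNReal.coe_inj, NNReal.coe_mk, NNReal.coe_zero]
      positivity
    have hS : Measurable fun p : ℝ × ℝ => a * p.1 + b * p.2 :=
      (measurable_fst.const_mul a).add (measurable_snd.const_mul b)
    have hmap : ∀ x : ℝ, (gaussianReal 0 1).map (fun y => a * x + b * y)
        = gaussianReal (a * x) vb := by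
      intro x
      have hcomp : (fun y : ℝ => a * x + b * y) = (fun z : ℝ => z + a * x) ∘ (fun y : ℝ => b * y) := by
        funext y; simp [add_comm]
      rw [hcomp, ← Measure.map_map (by fun_prop : Measurable fun z : ℝ => z + a * x)
        (by fun_prop : Measurable fun y : ℝ => b * y),
        gaussianReal_map_const_mul b, gaussianReal_map_add_const]
      norm_num
      rfl
    ext s hs
    rw [Measure.map_apply hS hs, Measure.prod_apply (hS hs)]
    have hinner : ∀ x : ℝ, (gaussianReal 0 1) (Prod.mk x ⁻¹' ((fun p : ℝ × ℝ => a * p.1 + b * p.2) ⁻¹' s))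
        = ∫⁻ u in s, gaussianPDF (a * x) vb u := by
      intro x
      have hpre : Prod.mk x ⁻¹' ((fun p : ℝ × ℝ => a * p.1 + b * p.2) ⁻¹' s)
          = (fun y => a * x + b * y) ⁻¹' s := rfl
      rw [hpre, ← Measure.map_apply (by fun_prop : Measurable fun y : ℝ => a * x + b * y) hs,
        hmap x, gaussianReal_apply _ hvb0 s]
    simp_rw [hinner]
    have hjoint : Measurable fun q : ℝ × ℝ => gaussianPDF (a * q.1) vb q.2 := by
      unfold gaussianPDF gaussianPDFReal
      fun_prop
    have hmeasf : Measurable fun x : ℝ => ∫⁻ u in s, gaussianPDF (a * x) vb u :=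
      Measurable.lintegral_prod_right hjoint
    rw [gaussianReal_of_var_ne_zero 0 one_ne_zero,
      lintegral_withDensity_eq_lintegral_mul _ (measurable_gaussianPDF 0 1) hmeasf]
    simp only [Pi.mul_apply]
    have hpull : ∀ x : ℝ, gaussianPDF 0 1 x * ∫⁻ u in s, gaussianPDF (a * x) vb u
        = ∫⁻ u in s, gaussianPDF 0 1 x * gaussianPDF (a * x) vb u := fun x =>
      (lintegral_const_mul _ (by
        have := hjoint.comp (measurable_prodMk_left (x := x))
        exact this)).symm
    simp_rw [hpull]
    rw [lintegral_lintegral_swap]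
    · have hpoint : ∀ u : ℝ, ∫⁻ x, gaussianPDF 0 1 x * gaussianPDF (a * x) vb u
          = gaussianPDF 0 1 u := by
        intro u
        rw [hvb]
        simp_rw [pdf_symm a b hab hb]
        rw [← hvb]
        rw [lintegral_const_mul _ (measurable_gaussianPDF _ _),
          lintegral_gaussianPDF_eq_one _ hvb0, mul_one]
      simp_rw [hpoint]
      rw [← gaussianReal_of_var_ne_zero 0 one_ne_zero]
      exact (gaussianReal_apply 0 one_ne_zero s).symm
    · exact (((measurable_gaussianPDF 0 1).comp measurable_fst).mul hjoint).aemeasurable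

instance stdGaussian_prob (d : ℕ) : IsProbabilityMeasure (stdGaussian d) := by
  unfold _root_.stdGaussian
  exact Measure.isProbabilityMeasure_map
    (MeasurableEquiv.toLp 2 (Fin d → ℝ)).measurable.aemeasurable

lemma measurable_affine {d : ℕ} (μ0 : EuclideanSpace ℝ (Fin d)) (τ : ℝ) :
    Measurable fun v : EuclideanSpace ℝ (Fin d) => μ0 + τ • v :=
  measurable_const.add (measurable_id.const_smul τ)

instance gaussianVec_prob {d : ℕ} (μ0 : EuclideanSpace ℝ (Fin d)) (τ : ℝ) :
    IsProbabilityMeasure (gaussianVec μ0 τ) := by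
  unfold gaussianVec
  exact Measure.isProbabilityMeasure_map (measurable_affine μ0 τ).aemeasurable

lemma stdGaussian_combine (d : ℕ) (a b : ℝ) (hab : a^2 + b^2 = 1) :
    ((stdGaussian d).prod (stdGaussian d)).map
      (fun p => a • p.1 + b • p.2) = stdGaussian d := by
  unfold _root_.stdGaussian
  set e := (MeasurableEquiv.toLp 2 (Fin d → ℝ)) with he
  have hG : Measurable fun p : (Fin d → ℝ) × (Fin d → ℝ) => fun i => a * p.1 i + b * p.2 i := by
    fun_prop
  have hF : Measurable fun p : EuclideanSpace ℝ (Fin d) × EuclideanSpace ℝ (Fin d) =>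
      a • p.1 + b • p.2 :=
    (measurable_fst.const_smul a).add (measurable_snd.const_smul b)
  rw [Measure.map_prod_map _ _ e.measurable e.measurable,
    Measure.map_map hF (Measurable.prodMap e.measurable e.measurable)]
  have hcomp : (fun p : EuclideanSpace ℝ (Fin d) × EuclideanSpace ℝ (Fin d) =>
      a • p.1 + b • p.2) ∘ (Prod.map e e)
      = e ∘ (fun p : (Fin d → ℝ) × (Fin d → ℝ) => fun i => a * p.1 i + b * p.2 i) := rfl
  rw [hcomp, ← Measure.map_map e.measurable hG]
  congr 1
  have h1 := measurePreserving_arrowProdEquivProdArrow ℝ ℝ (Fin d)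
    (fun _ => gaussianReal 0 1) (fun _ => gaussianReal 0 1)
  rw [← h1.map_eq, Measure.map_map hG h1.measurable]
  have h2 : MeasurePreserving (fun (f : Fin d → ℝ × ℝ) i => a * (f i).1 + b * (f i).2)
      (Measure.pi fun _ => (gaussianReal 0 1).prod (gaussianReal 0 1))
      (Measure.pi fun _ => gaussianReal 0 1) :=
    measurePreserving_pi _ _ (fun _ =>
      ⟨(measurable_fst.const_mul a).add (measurable_snd.const_mul b), oneD a b hab⟩)
  have hcomp2 : (fun p : (Fin d → ℝ) × (Fin d → ℝ) => fun i => a * p.1 i + b * p.2 i)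
      ∘ (MeasurableEquiv.arrowProdEquivProdArrow ℝ ℝ (Fin d))
      = fun (f : Fin d → ℝ × ℝ) i => a * (f i).1 + b * (f i).2 := rfl
  rw [hcomp2, h2.map_eq]

/-- Proposition 1: one-step marginal preservation for the sign-flipped DDIM noise injection. -/
theorem ddim_flip_marginal (d : ℕ) (η ξ τn τn1 : ℝ)
    (hη : η ∈ Set.Icc (0:ℝ) 1) (hξ : ξ = 1 ∨ ξ = -1)
    (hτn : 0 < τn) (hτn1 : 0 < τn1)
    {Ω : Type*} [MeasurableSpace Ω] (P : Measure Ω) [IsProbabilityMeasure P]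
    (x0 : EuclideanSpace ℝ (Fin d))
    (Xn Xn1 : Ω → EuclideanSpace ℝ (Fin d))
    (hXn : Measurable Xn) (hXn1 : Measurable Xn1)
    (hXnlaw : P.map Xn = gaussianVec x0 τn)
    (hcond : ∀ᵐ xn ∂(P.map Xn),
      condDistrib Xn1 Xn P xn
        = gaussianVec (x0 + (ξ * Real.sqrt (1 - η^2) * τn1 / τn) • (x0 - xn)) (η * τn1)) :
    P.map Xn1 = gaussianVec x0 τn1 := by
  obtain ⟨hη0, hη1⟩ := hη
  have hξ2 : ξ^2 = 1 := by rcases hξ with h | h <;> rw [h] <;> norm_num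
  set c : ℝ := ξ * Real.sqrt (1 - η^2) * τn1 / τn with hc
  set σ : ℝ := η * τn1 with hσ
  set a : ℝ := -(ξ * Real.sqrt (1 - η^2)) with ha
  set b : ℝ := η with hb
  have h1η : (0:ℝ) ≤ 1 - η^2 := by nlinarith
  have hsq : Real.sqrt (1 - η^2)^2 = 1 - η^2 := Real.sq_sqrt h1η
  have hab : a^2 + b^2 = 1 := by
    rw [ha, hb, neg_pow, mul_pow, hξ2]
    ring_nf
    nlinarith [hsq]
  -- the conditional mean as a function of xn, and of the standardized variable v
  set m : EuclideanSpace ℝ (Fin d) → EuclideanSpace ℝ (Fin d) := fun xn => x0 + c • (x0 - xn) with hm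
  have hmmeas : Measurable m := by
    rw [hm]
    exact measurable_const.add ((measurable_const.sub measurable_id).const_smul c)
  -- step 1: P.map Xn1 is the second marginal of the disintegrated joint law
  have hP : IsProbabilityMeasure (P.map Xn) := Measure.isProbabilityMeasure_map hXn.aemeasurable
  have hdis : (P.map Xn) ⊗ₘ condDistrib Xn1 Xn P = P.map fun ω => (Xn ω, Xn1 ω) := by
    rw [condDistrib_def, ← Measure.fst_map_prodMk (μ := P) (X := Xn) hXn1]
    exact Measure.disintegrate _ _
  have hmarg : P.map Xn1 = ((P.map Xn) ⊗ₘ condDistrib Xn1 Xn P).snd := by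
    rw [hdis, Measure.snd_map_prodMk hXn]
  ext s hs
  rw [hmarg, Measure.snd_apply hs, Measure.compProd_apply (measurable_snd hs)]
  have h1 : ∫⁻ xn, condDistrib Xn1 Xn P xn (Prod.mk xn ⁻¹' (Prod.snd ⁻¹' s)) ∂(P.map Xn)
      = ∫⁻ xn, gaussianVec (m xn) σ s ∂(P.map Xn) := by
    refine lintegral_congr_ae ?_
    filter_upwards [hcond] with xn h
    rw [show Prod.mk xn ⁻¹' (Prod.snd ⁻¹' s) = s from rfl, h]
  rw [h1]
  -- rewrite gaussianVec applications as stdGaussian of preimages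
  have hgv : ∀ (y : EuclideanSpace ℝ (Fin d)), gaussianVec y σ s = stdGaussian d ((fun w => y + σ • w) ⁻¹' s) := by
    intro y
    rw [gaussianVec, Measure.map_apply (measurable_affine y σ) hs]
  simp_rw [hgv]
  -- measurability of y ↦ stdGaussian ((y + σ • ·) ⁻¹' s)
  have hkermeas : Measurable fun y : EuclideanSpace ℝ (Fin d) => stdGaussian d ((fun w => y + σ • w) ⁻¹' s) := by
    have hind : ∀ y : EuclideanSpace ℝ (Fin d), stdGaussian d ((fun w => y + σ • w) ⁻¹' s)
        = ∫⁻ w, Set.indicator s (fun _ => (1:ℝ≥0∞)) (y + σ • w) ∂(stdGaussian d) := by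
      intro y
      rw [← lintegral_indicator_one (((measurable_affine y σ)) hs)]
      congr 1
    simp_rw [hind]
    refine Measurable.lintegral_prod_right ?_
    refine Measurable.indicator measurable_const ?_
    exact (measurable_fst.add (measurable_snd.const_smul σ)) hs
  -- step 2: substitute the law of Xn and change variables
  rw [hXnlaw, gaussianVec, lintegral_map (f := fun xn => stdGaussian d ((fun w => m xn + σ • w) ⁻¹' s))
    (hkermeas.comp hmmeas) (measurable_affine x0 τn)]
  -- step 3: algebra on the mean
  have hmean : ∀ v w : EuclideanSpace ℝ (Fin d), m (x0 + τn • v) + σ • w = x0 + τn1 • (a • v + b • w) := by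
    intro v w
    rw [hm, hσ, ha, hb, hc]
    match_scalars
    · ring
    · field_simp
      rw [hb]
    · ring
  simp_rw [hmean]
  -- step 4: recognize the product measure and conclude
  have hTmeas : Measurable fun p : EuclideanSpace ℝ (Fin d) × EuclideanSpace ℝ (Fin d) => x0 + τn1 • (a • p.1 + b • p.2) :=
    measurable_const.add
      (((measurable_fst.const_smul a).add (measurable_snd.const_smul b)).const_smul τn1)
  have hstep : ∫⁻ v, stdGaussian d ((fun w => x0 + τn1 • (a • v + b • w)) ⁻¹' s) ∂(stdGaussian d)
      = ((stdGaussian d).prod (stdGaussian d))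
          ((fun p : EuclideanSpace ℝ (Fin d) × EuclideanSpace ℝ (Fin d) => x0 + τn1 • (a • p.1 + b • p.2)) ⁻¹' s) := by
    rw [Measure.prod_apply (hTmeas hs)]
    rfl
  rw [hstep, show (fun p : EuclideanSpace ℝ (Fin d) × EuclideanSpace ℝ (Fin d) => x0 + τn1 • (a • p.1 + b • p.2)) ⁻¹' s
      = (fun p : EuclideanSpace ℝ (Fin d) × EuclideanSpace ℝ (Fin d) => a • p.1 + b • p.2) ⁻¹' ((fun u => x0 + τn1 • u) ⁻¹' s) from rfl,
    ← Measure.map_apply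
      (f := fun p : EuclideanSpace ℝ (Fin d) × EuclideanSpace ℝ (Fin d) => a • p.1 + b • p.2)
      ((measurable_fst.const_smul a).add (measurable_snd.const_smul b))
      ((measurable_affine x0 τn1) hs),
    stdGaussian_combine d a b hab,
    ← Measure.map_apply (measurable_affine x0 τn1) hs]
  rfl
end

section
/- Let T = τ_N > τ_{N-1} > ... > τ_1 > 0 and suppose for each n the conditional law of x_{τ_{n-1}} given (x_{τ_n}, x_0) is N(x_0 + ξ√(1-η²) τ_{n-1}(x_0 - x_{τ_n})/τ_n, η²τ_{n-1}² I) and x_{τ_N} | x_0 ~ N(x_0, τ_N² I). Then by induction, for every n ∈ {1,...,N}, x_{τ_n} | x_0 ~ N(x_0, τ_n² I). -/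
open MeasureTheory ProbabilityTheory Matrix Filter

open Real
open scoped ENNReal NNReal

instance (d : ℕ) : IsProbabilityMeasure (stdGaussian d) := by
  unfold _root_.stdGaussian
  exact Measure.isProbabilityMeasure_map (MeasurableEquiv.measurable _).aemeasurable

instance {d : ℕ} (μ : EuclideanSpace ℝ (Fin d)) (τ : ℝ) :
    IsProbabilityMeasure (gaussianVec μ τ) := by
  unfold gaussianVec
  exact Measure.isProbabilityMeasure_map (by fun_prop)


lemma map_withDensity_equiv {α β : Type*} [MeasurableSpace α] [MeasurableSpace β]
    (μ : Measure α) (e : α ≃ᵐ β) {f : α → ℝ≥0∞} (hf : Measurable f) :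
    (μ.withDensity f).map e = (μ.map e).withDensity (f ∘ e.symm) := by
  ext s hs
  rw [Measure.map_apply e.measurable hs,
    withDensity_apply _ (e.measurable hs), withDensity_apply _ hs,
    Measure.restrict_map e.measurable hs,
    lintegral_map (hf.comp e.symm.measurable) e.measurable]
  simp [Function.comp]

lemma prod_withDensity {f g : ℝ → ℝ≥0∞} (hf : Measurable f) (hg : Measurable g)
    [SigmaFinite (volume.withDensity f)] [SigmaFinite (volume.withDensity g)] :
    (volume.withDensity f).prod (volume.withDensity g)
      = (volume : Measure (ℝ × ℝ)).withDensity (fun p => f p.1 * g p.2) := by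
  refine Measure.prod_eq fun s t hs ht => ?_
  rw [withDensity_apply _ (hs.prod ht), Measure.volume_eq_prod, ← Measure.prod_restrict,
    lintegral_prod_mul hf.aemeasurable hg.aemeasurable,
    withDensity_apply _ hs, withDensity_apply _ ht]

lemma conv1d (a b : ℝ) :
    ((gaussianReal 0 1).prod (gaussianReal 0 1)).map (fun p => a * p.1 + b * p.2)
      = gaussianReal 0 (NNReal.mk (a^2 + b^2) (by positivity)) := by
  by_cases hr : a^2 + b^2 = 0
  · have ha : a = 0 := by nlinarith [sq_nonneg a, sq_nonneg b]
    have hb : b = 0 := by nlinarith [sq_nonneg a, sq_nonneg b]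
    have : NNReal.mk (a^2 + b^2) (by positivity) = 0 := by ext; simp [hr]
    rw [this, gaussianReal_zero_var, ha, hb]
    simp only [zero_mul, add_zero]
    rw [Measure.map_const]
    simp
  · set r : ℝ := Real.sqrt (a^2 + b^2) with hrdef
    have hr2 : r^2 = a^2 + b^2 := Real.sq_sqrt (by positivity)
    have hrpos : 0 < r := Real.sqrt_pos.mpr (lt_of_le_of_ne (by positivity) (Ne.symm hr))
    set a' : ℝ := a / r with ha'
    set b' : ℝ := b / r with hb'
    have h1 : a'^2 + b'^2 = 1 := by
      rw [ha', hb', div_pow, div_pow, ← add_div, ← hr2]; exact div_self (by positivity)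
    -- the rotation as a measurable equiv
    let e : (ℝ × ℝ) ≃ᵐ (ℝ × ℝ) :=
    { toFun := fun p => (a' * p.1 + b' * p.2, -b' * p.1 + a' * p.2)
      invFun := fun q => (a' * q.1 - b' * q.2, b' * q.1 + a' * q.2)
      left_inv := fun p => Prod.ext (by simp only; linear_combination p.1 * h1)
        (by simp only; linear_combination p.2 * h1)
      right_inv := fun q => Prod.ext (by simp only; linear_combination q.1 * h1)
        (by simp only; linear_combination q.2 * h1)
      measurable_toFun := by
        show Measurable fun p : ℝ × ℝ => (a' * p.1 + b' * p.2, -b' * p.1 + a' * p.2)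
        fun_prop
      measurable_invFun := by
        show Measurable fun q : ℝ × ℝ => (a' * q.1 - b' * q.2, b' * q.1 + a' * q.2)
        fun_prop }
    -- Lebesgue measure is invariant under the rotation
    have hvol : (volume : Measure (ℝ × ℝ)).map e = volume := by
      have : (⇑e : ℝ × ℝ → ℝ × ℝ)
          = ⇑(Matrix.toLin (Module.Basis.finTwoProd ℝ) (Module.Basis.finTwoProd ℝ) !![a', b'; -b', a']) := by
        funext p
        show (a' * p.1 + b' * p.2, -b' * p.1 + a' * p.2) = _
        rw [Matrix.toLin_finTwoProd_apply]
      rw [this, Measure.map_linearMap_addHaar_eq_smul_addHaar _ (by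
        rw [LinearMap.det_toLin, Matrix.det_fin_two_of]; nlinarith [h1])]
      rw [LinearMap.det_toLin, Matrix.det_fin_two_of]
      have : a' * a' - b' * -b' = 1 := by nlinarith [h1]
      rw [this]
      simp
    -- the 2D standard Gaussian as a density
    haveI hσ : SigmaFinite (volume.withDensity (gaussianPDF 0 1)) := by
      rw [← gaussianReal_of_var_ne_zero 0 one_ne_zero]; infer_instance
    have hGG : (gaussianReal 0 1).prod (gaussianReal 0 1)
        = (volume : Measure (ℝ × ℝ)).withDensity
            (fun p => gaussianPDF 0 1 p.1 * gaussianPDF 0 1 p.2) := by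
      rw [gaussianReal_of_var_ne_zero 0 one_ne_zero]
      exact _root_.prod_withDensity (measurable_gaussianPDF 0 1) (measurable_gaussianPDF 0 1)
    -- rotation invariance of the 2D Gaussian
    have hrot : ((gaussianReal 0 1).prod (gaussianReal 0 1)).map e
        = (gaussianReal 0 1).prod (gaussianReal 0 1) := by
      rw [hGG, map_withDensity_equiv (f := fun p => gaussianPDF 0 1 p.1 * gaussianPDF 0 1 p.2) _ e (((measurable_gaussianPDF 0 1).comp measurable_fst).mul ((measurable_gaussianPDF 0 1).comp measurable_snd)), hvol]
      congr 1
      funext q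
      show gaussianPDF 0 1 (a' * q.1 - b' * q.2) * gaussianPDF 0 1 (b' * q.1 + a' * q.2)
        = gaussianPDF 0 1 q.1 * gaussianPDF 0 1 q.2
      simp only [gaussianPDF, gaussianPDFReal]
      rw [← ENNReal.ofReal_mul (by positivity), ← ENNReal.ofReal_mul (by positivity)]
      congr 1
      have hmul : ∀ u v : ℝ, ((Real.sqrt (2 * π * ((1:ℝ≥0):ℝ)))⁻¹ * rexp u)
          * ((Real.sqrt (2 * π * ((1:ℝ≥0):ℝ)))⁻¹ * rexp v)
          = ((Real.sqrt (2 * π * ((1:ℝ≥0):ℝ)))⁻¹)^2 * rexp (u + v) := by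
        intro u v; rw [Real.exp_add]; ring
      rw [hmul, hmul]
      congr 1
      have h2 : (a' * q.1 - b' * q.2 - 0)^2 + (b' * q.1 + a' * q.2 - 0)^2
          = (q.1 - 0)^2 + (q.2 - 0)^2 := by
        ring_nf
        linear_combination (q.1^2 + q.2^2) * h1
      push_cast
      push_cast at h2
      field_simp
      congr 1; linear_combination (-1/2 : ℝ) * h2
    -- now project
    have hcomp : (fun p : ℝ × ℝ => a * p.1 + b * p.2)
        = ((fun x : ℝ => r * x) ∘ Prod.fst) ∘ ⇑e := by
      funext p
      show a * p.1 + b * p.2 = r * (a' * p.1 + b' * p.2)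
      rw [ha', hb']; field_simp
    rw [hcomp,
      ← Measure.map_map ((by fun_prop : Measurable fun x : ℝ => r * x).comp measurable_fst)
        e.measurable,
      hrot,
      ← Measure.map_map (by fun_prop : Measurable fun x : ℝ => r * x) measurable_fst,
      Measure.map_fst_prod]
    simp only [measure_univ, one_smul]
    have : (fun x : ℝ => r * x) = (r * ·) := rfl
    rw [this, gaussianReal_map_const_mul]
    congr 1
    · simp
    · rw [mul_one]
      ext
      exact hr2

lemma pi_map_comp {d : ℕ} {α : Type*} [MeasurableSpace α] (μ : Fin d → Measure α)
    [∀ i, IsProbabilityMeasure (μ i)] (g : Fin d → α → ℝ) (hg : ∀ i, Measurable (g i)) :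
    (Measure.pi μ).map (fun f i => g i (f i)) = Measure.pi (fun i => (μ i).map (g i)) := by
  haveI : ∀ i, IsProbabilityMeasure ((μ i).map (g i)) :=
    fun i => Measure.isProbabilityMeasure_map (hg i).aemeasurable
  refine (Measure.pi_eq fun s hs => ?_).symm
  have hm : Measurable (fun (f : Fin d → α) (i : Fin d) => g i (f i)) :=
    measurable_pi_lambda _ fun i => (hg i).comp (measurable_pi_apply i)
  rw [Measure.map_apply hm (MeasurableSet.univ_pi hs)]
  have hpre : (fun f (i : Fin d) => g i (f i)) ⁻¹' Set.pi Set.univ s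
      = Set.pi Set.univ (fun i => g i ⁻¹' s i) := by
    ext f; simp [Set.mem_pi]
  rw [hpre, Measure.pi_pi]
  exact Finset.prod_congr rfl fun i _ => (Measure.map_apply (hg i) (hs i)).symm

lemma pi_master (d : ℕ) (x0 : Fin d → ℝ) (a b : ℝ) :
    (((Measure.pi fun _ : Fin d => gaussianReal 0 1).prod
        (Measure.pi fun _ : Fin d => gaussianReal 0 1)).map
      (fun p (i : Fin d) => x0 i + a * p.1 i + b * p.2 i))
    = (Measure.pi fun _ : Fin d => gaussianReal 0 1).map
        (fun v (i : Fin d) => x0 i + Real.sqrt (a^2 + b^2) * v i) := by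
  have hmeas : Measurable (fun p (i : Fin d) => x0 i + a * p.1 i + b * p.2 i :
      (Fin d → ℝ) × (Fin d → ℝ) → (Fin d → ℝ)) := by fun_prop
  have hMP := measurePreserving_arrowProdEquivProdArrow ℝ ℝ (Fin d)
    (fun _ => gaussianReal 0 1) (fun _ => gaussianReal 0 1)
  rw [← hMP.map_eq, Measure.map_map hmeas (MeasurableEquiv.measurable _)]
  have hc : (fun p (i : Fin d) => x0 i + a * p.1 i + b * p.2 i)
        ∘ ⇑(MeasurableEquiv.arrowProdEquivProdArrow ℝ ℝ (Fin d))
      = fun f (i : Fin d) => (fun q : ℝ × ℝ => x0 i + a * q.1 + b * q.2) (f i) := rfl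
  rw [hc]
  rw [pi_map_comp _ (fun i (q : ℝ × ℝ) => x0 i + a * q.1 + b * q.2) (fun i => by fun_prop),
    pi_map_comp _ (fun i t => x0 i + Real.sqrt (a^2 + b^2) * t) (fun i => by fun_prop)]
  congr 1
  funext i
  have h1 : (fun q : ℝ × ℝ => x0 i + a * q.1 + b * q.2)
      = (fun u => x0 i + u) ∘ (fun q : ℝ × ℝ => a * q.1 + b * q.2) := by
    funext q; simp [Function.comp, add_assoc]
  have h2 : (fun t : ℝ => x0 i + Real.sqrt (a^2 + b^2) * t)
      = (fun u => x0 i + u) ∘ (fun t : ℝ => Real.sqrt (a^2 + b^2) * t) := rfl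
  rw [h1, h2, ← Measure.map_map (by fun_prop) (by fun_prop),
    ← Measure.map_map (by fun_prop) (by fun_prop)]
  have h3 : (fun t : ℝ => Real.sqrt (a^2 + b^2) * t) = (Real.sqrt (a^2 + b^2) * ·) := rfl
  have h4 : (fun u : ℝ => x0 i + u) = (x0 i + ·) := rfl
  rw [conv1d, h3, h4, gaussianReal_map_const_mul, gaussianReal_map_const_add,
    gaussianReal_map_const_add]
  congr 1
  · simp
  · rw [mul_one]
    ext
    simp [Real.sq_sqrt (by positivity : (0:ℝ) ≤ a^2 + b^2)]

lemma euclid_master (d : ℕ) (x0 : EuclideanSpace ℝ (Fin d)) (a b : ℝ) :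
    ((stdGaussian d).prod (stdGaussian d)).map (fun p => x0 + a • p.1 + b • p.2)
      = (stdGaussian d).map (fun v => x0 + Real.sqrt (a^2 + b^2) • v) := by
  set es := (MeasurableEquiv.toLp 2 (Fin d → ℝ))
  have hesMP : MeasurePreserving (⇑es) (Measure.pi fun _ : Fin d => gaussianReal 0 1)
      (stdGaussian d) := ⟨es.measurable, rfl⟩
  have hprod := (hesMP.prod hesMP).map_eq
  have hπ : Measurable (fun (p : (Fin d → ℝ) × (Fin d → ℝ)) (i : Fin d) =>
      x0 i + a * p.1 i + b * p.2 i) := by fun_prop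
  have hπ' : Measurable (fun (v : Fin d → ℝ) (i : Fin d) =>
      x0 i + Real.sqrt (a^2 + b^2) * v i) := by fun_prop
  have hE : Measurable (fun p : (EuclideanSpace ℝ (Fin d)) × (EuclideanSpace ℝ (Fin d)) =>
      x0 + a • p.1 + b • p.2) := by fun_prop
  rw [← hprod, Measure.map_map hE (es.measurable.prodMap es.measurable)]
  have hc1 : (fun p : (EuclideanSpace ℝ (Fin d)) × (EuclideanSpace ℝ (Fin d)) =>
        x0 + a • p.1 + b • p.2) ∘ (Prod.map ⇑es ⇑es)
      = ⇑es ∘ (fun (p : (Fin d → ℝ) × (Fin d → ℝ)) (i : Fin d) =>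
        x0 i + a * p.1 i + b * p.2 i) := rfl
  rw [hc1, ← Measure.map_map es.measurable hπ, pi_master,
    Measure.map_map es.measurable hπ']
  conv_rhs => rw [_root_.stdGaussian, Measure.map_map (by fun_prop : Measurable fun v :
    EuclideanSpace ℝ (Fin d) => x0 + Real.sqrt (a^2 + b^2) • v) es.measurable]
  rfl

lemma gaussianVec_lintegral {d : ℕ} (x0 : EuclideanSpace ℝ (Fin d)) (c σ τ τ' : ℝ)
    (hτ' : 0 ≤ τ') (hvar : (c * τ)^2 + σ^2 = τ'^2) {s : Set (EuclideanSpace ℝ (Fin d))}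
    (hs : MeasurableSet s) :
    ∫⁻ x, gaussianVec (x0 + c • (x0 - x)) σ s ∂(gaussianVec x0 τ) = gaussianVec x0 τ' s := by
  set S := stdGaussian d
  set a : ℝ := -(c * τ)
  have hmean : ∀ m : EuclideanSpace ℝ (Fin d),
      gaussianVec m σ s = S ((fun v => m + σ • v) ⁻¹' s) := fun m => by
    rw [gaussianVec, Measure.map_apply (by fun_prop) hs]
  set B : Set ((EuclideanSpace ℝ (Fin d)) × (EuclideanSpace ℝ (Fin d))) :=
    (fun q : (EuclideanSpace ℝ (Fin d)) × (EuclideanSpace ℝ (Fin d)) =>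
      (x0 + c • (x0 - q.1)) + σ • q.2) ⁻¹' s with hBdef
  have hB : MeasurableSet B :=
    (by fun_prop : Measurable (fun q : (EuclideanSpace ℝ (Fin d)) × (EuclideanSpace ℝ (Fin d)) =>
      (x0 + c • (x0 - q.1)) + σ • q.2)) hs
  have hF : (fun x : EuclideanSpace ℝ (Fin d) => gaussianVec (x0 + c • (x0 - x)) σ s)
      = fun x => S (Prod.mk x ⁻¹' B) := by
    funext x; rw [hmean]; rfl
  have hFmeas : Measurable (fun x : EuclideanSpace ℝ (Fin d) =>
      gaussianVec (x0 + c • (x0 - x)) σ s) := by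
    rw [hF]; exact measurable_measure_prodMk_left hB
  -- rewrite the outer integral as an integral over the standard Gaussian
  rw [show gaussianVec x0 τ = S.map (fun w => x0 + τ • w) from rfl,
    lintegral_map hFmeas (by fun_prop)]
  have hsimp : ∀ w : EuclideanSpace ℝ (Fin d),
      x0 + c • (x0 - (x0 + τ • w)) = x0 + a • w := by
    intro w
    have : x0 - (x0 + τ • w) = -(τ • w) := by abel
    rw [this, smul_neg, smul_smul, ← neg_smul]
  have hint : ∀ w : EuclideanSpace ℝ (Fin d),
      gaussianVec (x0 + c • (x0 - (x0 + τ • w))) σ s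
        = S (Prod.mk w ⁻¹' ((fun p : (EuclideanSpace ℝ (Fin d)) × (EuclideanSpace ℝ (Fin d)) =>
            x0 + a • p.1 + σ • p.2) ⁻¹' s)) := by
    intro w
    rw [hmean, hsimp]
    rfl
  simp only [hint]
  have hA : MeasurableSet ((fun p : (EuclideanSpace ℝ (Fin d)) × (EuclideanSpace ℝ (Fin d)) =>
      x0 + a • p.1 + σ • p.2) ⁻¹' s) :=
    (by fun_prop : Measurable (fun p : (EuclideanSpace ℝ (Fin d)) × (EuclideanSpace ℝ (Fin d)) =>
      x0 + a • p.1 + σ • p.2)) hs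
  rw [← Measure.prod_apply hA, ← Measure.map_apply (by fun_prop) hs, euclid_master]
  have : Real.sqrt (a^2 + σ^2) = τ' := by
    rw [show a^2 = (c*τ)^2 by rw [neg_sq], hvar, Real.sqrt_sq hτ']
  rw [this]
  rfl

/-- Inductive version of Proposition 1: the whole reverse chain preserves the Gaussian marginals. -/
theorem ddim_flip_marginal_chain (d N : ℕ) (hN : 1 ≤ N) (η ξ : ℝ)
    (hη : η ∈ Set.Icc (0:ℝ) 1) (hξ : ξ = 1 ∨ ξ = -1)
    (τ : ℕ → ℝ)
    (hτpos : ∀ n, 1 ≤ n → n ≤ N → 0 < τ n)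
    (hτmono : ∀ n, 1 ≤ n → n < N → τ n < τ (n + 1))
    {Ω : Type*} [MeasurableSpace Ω] (P : Measure Ω) [IsProbabilityMeasure P]
    (x0 : EuclideanSpace ℝ (Fin d))
    (X : ℕ → Ω → EuclideanSpace ℝ (Fin d))
    (hX : ∀ n, Measurable (X n))
    (hXN : P.map (X N) = gaussianVec x0 (τ N))
    (hcond : ∀ n, 2 ≤ n → n ≤ N →
      ∀ᵐ xn ∂(P.map (X n)),
        condDistrib (X (n - 1)) (X n) P xn
          = gaussianVec (x0 + (ξ * Real.sqrt (1 - η^2) * τ (n - 1) / τ n) • (x0 - xn))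
              (η * τ (n - 1))) :
    ∀ n, 1 ≤ n → n ≤ N → P.map (X n) = gaussianVec x0 (τ n) := by
  have step : ∀ m, 2 ≤ m → m ≤ N → P.map (X m) = gaussianVec x0 (τ m) →
      P.map (X (m - 1)) = gaussianVec x0 (τ (m - 1)) := by
    intro m hm2 hmN hXm
    have hτm : 0 < τ m := hτpos m (by omega) hmN
    have hτm1 : 0 < τ (m - 1) := hτpos (m - 1) (by omega) (by omega)
    set c := ξ * Real.sqrt (1 - η^2) * τ (m - 1) / τ m with hc
    have hξ2 : ξ^2 = 1 := by rcases hξ with h | h <;> rw [h] <;> norm_num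
    have h1η : (Real.sqrt (1 - η^2))^2 = 1 - η^2 :=
      Real.sq_sqrt (by nlinarith [hη.2, hη.1])
    have hcm : c * τ m = ξ * Real.sqrt (1 - η^2) * τ (m - 1) := by
      rw [hc]; field_simp
    have hvar : (c * τ m)^2 + (η * τ (m - 1))^2 = (τ (m - 1))^2 := by
      rw [hcm]
      linear_combination (τ (m - 1))^2 * (Real.sqrt (1 - η^2))^2 * hξ2
        + (τ (m - 1))^2 * h1η
    ext s hs
    rw [Measure.map_apply (hX (m - 1)) hs]
    have h1 : P ((X (m - 1)) ⁻¹' s)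
        = ∫⁻ a, condDistrib (X (m - 1)) (X m) P (X m a) s ∂P := by
      have := setLIntegral_preimage_condDistrib (hX m) ((hX (m - 1)).aemeasurable : AEMeasurable _ P) hs
        MeasurableSet.univ
      simpa using this.symm
    rw [h1, ← lintegral_map (Kernel.measurable_coe _ hs) (hX m)]
    have h2 : ∫⁻ x, condDistrib (X (m - 1)) (X m) P x s ∂(P.map (X m))
        = ∫⁻ x, gaussianVec (x0 + c • (x0 - x)) (η * τ (m - 1)) s ∂(P.map (X m)) := by
      refine lintegral_congr_ae ?_
      filter_upwards [hcond m hm2 hmN] with x hx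
      rw [hx]
    rw [h2, hXm, gaussianVec_lintegral x0 c (η * τ (m - 1)) (τ m) (τ (m - 1)) hτm1.le hvar hs]
  have main : ∀ k, k ≤ N - 1 → P.map (X (N - k)) = gaussianVec x0 (τ (N - k)) := by
    intro k
    induction k with
    | zero => intro _; simpa using hXN
    | succ k ih =>
      intro hk
      have h := step (N - k) (by omega) (by omega) (ih (by omega))
      have he : N - k - 1 = N - (k + 1) := by omega
      rwa [he] at h
  intro n h1 hN'
  have h := main (N - n) (by omega)
  have h2 : N - (N - n) = n := by omega
  rwa [h2] at h
end
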